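/- Let ψ ∈ ℂ^n be a unit vector, σ1 := ψψ* (a pure state), σ0 an n×n density matrix, p0, p1 probability vectors on a finite set X, and fix s0 ∈ (0,1). Let γ := tr σ̃0, where σ̃0 is the generalized Schur complement of σ0 with respect to the projection π := ψψ*. Then a classical-to-quantum channel Γ with Γ(p0) = σ0 and Γ(p1) = σ1 exists if and only if Σ_{x : p1(x)>0} p0(x)^s · p1(x)^{1−s} ≤ γ^s holds for every s ∈ (s0, 1). -/

import Mathlib

open Matrix
open scoped Kronecker ComplexOrder

noncomputable section

/-- A probability vector on a finite set. -/
def ProbVec {X : Type*} [Fintype X] (p : X → ℝ) : Prop :=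
  (∀ x, 0 ≤ p x) ∧ ∑ x, p x = 1

/-- A density matrix: positive semidefinite with trace one. -/
def IsDensityMatrix {n : ℕ} (ρ : Matrix (Fin n) (Fin n) ℂ) : Prop :=
  ρ.PosSemidef ∧ ρ.trace = 1

/-- The action of a classical-to-quantum channel, given by a family of density
matrices `ρ`, on a probability vector `p`. -/
def cqApply {X : Type*} [Fintype X] {n : ℕ} (ρ : X → Matrix (Fin n) (Fin n) ℂ)
    (p : X → ℝ) : Matrix (Fin n) (Fin n) ℂ :=
  ∑ x, (p x : ℂ) • ρ x

/-- The recession slope `lim_{λ → ∞} f(λ)/λ`, as an extended real number.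
(For convex continuous `f` the limit exists and equals this limsup.) -/
def recessionSlope (f : ℝ → ℝ) : EReal :=
  Filter.limsup (fun lam : ℝ => ((f lam / lam : ℝ) : EReal)) Filter.atTop

/-- The `f`-divergence of two probability vectors, valued in `ℝ ∪ {+∞}`
(with the convention `0 * ∞ = 0`, which holds for `EReal` multiplication). -/
def fDiv {X : Type*} [Fintype X] (f : ℝ → ℝ) (p0 p1 : X → ℝ) : EReal :=
  ((∑ x, if 0 < p1 x then p1 x * f (p0 x / p1 x) else 0 : ℝ) : EReal)
    + ((∑ x, if 0 < p1 x then 0 else p0 x : ℝ) : EReal) * recessionSlope f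

/-- The maximal `f`-divergence: the infimum of `D_f(q0‖q1)` over all classical
families mapped onto `(σ0, σ1)` by some classical-to-quantum channel. -/
def DfMax {n : ℕ} (f : ℝ → ℝ) (σ0 σ1 : Matrix (Fin n) (Fin n) ℂ) : EReal :=
  sInf { d : EReal |
    ∃ (m : ℕ) (q0 q1 : Fin m → ℝ) (ρ : Fin m → Matrix (Fin n) (Fin n) ℂ),
      ProbVec q0 ∧ ProbVec q1 ∧ (∀ x, IsDensityMatrix (ρ x)) ∧
      cqApply ρ q0 = σ0 ∧ cqApply ρ q1 = σ1 ∧ d = fDiv f q0 q1 }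

/-- Spectral functional calculus for Hermitian matrices (junk value `0` on
non-Hermitian input). -/
def hermCFC {n : ℕ} (f : ℝ → ℝ) (A : Matrix (Fin n) (Fin n) ℂ) :
    Matrix (Fin n) (Fin n) ℂ :=
  if hA : A.IsHermitian then
    (hA.eigenvectorUnitary : Matrix (Fin n) (Fin n) ℂ) *
      Matrix.diagonal (fun i => (f (hA.eigenvalues i) : ℂ)) *
      (star (hA.eigenvectorUnitary : Matrix (Fin n) (Fin n) ℂ))
  else 0

/-- Spectral pseudo-inverse: invert the nonzero eigenvalues. -/
def pinvMat {n : ℕ} (A : Matrix (Fin n) (Fin n) ℂ) : Matrix (Fin n) (Fin n) ℂ :=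
  hermCFC (fun x => if x = 0 then 0 else x⁻¹) A

/-- Orthogonal projection onto the range of a Hermitian matrix
(spectral projection onto the nonzero eigenvalues). -/
def rangeProj {n : ℕ} (A : Matrix (Fin n) (Fin n) ℂ) : Matrix (Fin n) (Fin n) ℂ :=
  hermCFC (fun x => if x = 0 then 0 else 1) A

/-- `A ↦ (A⁺)^{1/2}`, the square root of the spectral pseudo-inverse. -/
def invSqrtMat {n : ℕ} (A : Matrix (Fin n) (Fin n) ℂ) : Matrix (Fin n) (Fin n) ℂ :=
  hermCFC (fun x => if x = 0 then 0 else (Real.sqrt x)⁻¹) A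

/-- Generalized Schur complement of `σ0` with respect to a projection `π`:
`π σ0 π − π σ0 (1−π) · ((1−π) σ0 (1−π))⁺ · (1−π) σ0 π`. -/
def schurCompl {n : ℕ} (σ0 π : Matrix (Fin n) (Fin n) ℂ) :
    Matrix (Fin n) (Fin n) ℂ :=
  π * σ0 * π -
    (π * σ0 * (1 - π)) * pinvMat ((1 - π) * σ0 * (1 - π)) * ((1 - π) * σ0 * π)

/-- `σ̃0`: the generalized Schur complement of `σ0` with respect to the
projection onto the range of `σ1`. -/
def sigmaTilde {n : ℕ} (σ0 σ1 : Matrix (Fin n) (Fin n) ℂ) :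
    Matrix (Fin n) (Fin n) ℂ :=
  schurCompl σ0 (rangeProj σ1)

/-- The closed-form expression
`F_f(σ0,σ1) = tr σ1 f(σ1^{-1/2} σ̃0 σ1^{-1/2}) + (1 − tr σ̃0) L(f)`. -/
def Ff {n : ℕ} (f : ℝ → ℝ) (σ0 σ1 : Matrix (Fin n) (Fin n) ℂ) : EReal :=
  (((σ1 * hermCFC f (invSqrtMat σ1 * sigmaTilde σ0 σ1 * invSqrtMat σ1)).trace.re : ℝ) : EReal)
    + ((1 - (sigmaTilde σ0 σ1).trace.re : ℝ) : EReal) * recessionSlope f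

/-- Operator convexity of a function on `[0,∞)`, via the spectral functional
calculus on positive semidefinite complex matrices. -/
def OperatorConvex (f : ℝ → ℝ) : Prop :=
  ∀ (n : ℕ) (A B : Matrix (Fin n) (Fin n) ℂ), A.PosSemidef → B.PosSemidef →
    ∀ t : ℝ, 0 ≤ t → t ≤ 1 →
      (t • hermCFC f A + (1 - t) • hermCFC f B
        - hermCFC f (t • A + (1 - t) • B)).PosSemidef

/-- A CPTP map between matrix algebras: trace preserving and with positive
semidefinite Choi matrix. -/
def IsCPTP {n k : ℕ}
    (Λ : Matrix (Fin n) (Fin n) ℂ →ₗ[ℂ] Matrix (Fin k) (Fin k) ℂ) : Prop :=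
  (∀ A, (Λ A).trace = A.trace) ∧
    (∑ i : Fin n, ∑ j : Fin n,
      (Λ (Matrix.single i j 1)) ⊗ₖ (Matrix.single i j (1 : ℂ))).PosSemidef

/-- The largest eigenvalue of a Hermitian matrix (junk value `0` otherwise). -/
def lmax {k : ℕ} (W : Matrix (Fin k) (Fin k) ℂ) : ℝ :=
  if h : W.IsHermitian then ⨆ i, h.eigenvalues i else 0

/-- A stochastic matrix (`P y x` is the probability of `y` given `x`). -/
def IsStochastic {X Y : Type*} [Fintype X] [Fintype Y] (P : Y → X → ℝ) : Prop :=
  (∀ y x, 0 ≤ P y x) ∧ ∀ x, ∑ y, P y x = 1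

/-- The action of a stochastic matrix on a probability vector. -/
def stocApply {X Y : Type*} [Fintype X] [Fintype Y] (P : Y → X → ℝ)
    (p : X → ℝ) : Y → ℝ :=
  fun y => ∑ x, P y x * p x

end

section CQToolkit

open Matrix
open scoped ComplexOrder

variable {n : ℕ}

lemma hermCFC_mul (f g : ℝ → ℝ) {A : Matrix (Fin n) (Fin n) ℂ} (hA : A.IsHermitian) :
    hermCFC f A * hermCFC g A = hermCFC (fun x => f x * g x) A := by
  have hU : star (hA.eigenvectorUnitary : Matrix (Fin n) (Fin n) ℂ) *
      (hA.eigenvectorUnitary : Matrix (Fin n) (Fin n) ℂ) = 1 :=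
    Matrix.mem_unitaryGroup_iff'.mp hA.eigenvectorUnitary.2
  simp only [hermCFC, dif_pos hA]
  set U : Matrix (Fin n) (Fin n) ℂ := (hA.eigenvectorUnitary : Matrix (Fin n) (Fin n) ℂ) with hUdef
  set D1 : Matrix (Fin n) (Fin n) ℂ := Matrix.diagonal (fun i => (f (hA.eigenvalues i) : ℂ))
  set D2 : Matrix (Fin n) (Fin n) ℂ := Matrix.diagonal (fun i => (g (hA.eigenvalues i) : ℂ))
  have : U * D1 * star U * (U * D2 * star U) = U * (D1 * D2) * star U := by
    rw [mul_assoc (U * D1), ← mul_assoc (star U) (U * D2) (star U), ← mul_assoc (star U) U D2, hU, one_mul, ← mul_assoc, mul_assoc U]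
  rw [this]
  congr 1
  congr 1
  rw [Matrix.diagonal_mul_diagonal]
  congr 1
  funext i
  push_cast
  rfl

lemma hermCFC_id {A : Matrix (Fin n) (Fin n) ℂ} (hA : A.IsHermitian) :
    hermCFC (fun x => x) A = A := by
  simp only [hermCFC, dif_pos hA]
  exact (hA.spectral_theorem).symm

lemma hermCFC_conjTranspose (f : ℝ → ℝ) {A : Matrix (Fin n) (Fin n) ℂ} (hA : A.IsHermitian) :
    (hermCFC f A)ᴴ = hermCFC f A := by
  have hd : (star fun i : Fin n => (f (hA.eigenvalues i) : ℂ))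
      = fun i => (f (hA.eigenvalues i) : ℂ) := by
    funext i; simp [Complex.conj_ofReal]
  simp only [hermCFC, dif_pos hA, Matrix.star_eq_conjTranspose, conjTranspose_mul,
    conjTranspose_conjTranspose, diagonal_conjTranspose, hd, mul_assoc]

lemma hermCFC_isHermitian (f : ℝ → ℝ) {A : Matrix (Fin n) (Fin n) ℂ} (hA : A.IsHermitian) :
    (hermCFC f A).IsHermitian := hermCFC_conjTranspose f hA

end CQToolkit
section CQAux2
open Matrix
open scoped ComplexOrder

variable {n : ℕ}

/-- smul of PSD matrix by a nonneg real is PSD -/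
lemma psd_smul_real {M : Matrix (Fin n) (Fin n) ℂ} (hM : M.PosSemidef) {r : ℝ} (hr : 0 ≤ r) :
    ((r : ℂ) • M).PosSemidef := by
  refine Matrix.PosSemidef.of_dotProduct_mulVec_nonneg ?_ ?_
  · have hs : star (r : ℂ) = (r : ℂ) := by simp [Complex.conj_ofReal]
    unfold Matrix.IsHermitian
    rw [Matrix.conjTranspose_smul, hs, hM.1]
  · intro x
    rw [Matrix.smul_mulVec, dotProduct_smul, smul_eq_mul]
    refine mul_nonneg ?_ (hM.dotProduct_mulVec_nonneg x)
    rw [Complex.nonneg_iff]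
    simp [hr]

open scoped MatrixOrder in
lemma psd_sqrt_exists {M : Matrix (Fin n) (Fin n) ℂ} (hM : M.PosSemidef) :
    ∃ C : Matrix (Fin n) (Fin n) ℂ, C * C = M ∧ Cᴴ = C :=
  ⟨CFC.sqrt M, CFC.sqrt_mul_sqrt_self M hM.nonneg, (CFC.sqrt_nonneg M).posSemidef.1⟩

lemma psd_diag_nonneg {M : Matrix (Fin n) (Fin n) ℂ} (hM : M.PosSemidef) (i : Fin n) :
    0 ≤ M i i := by
  have h := hM.dotProduct_mulVec_nonneg (Pi.single i 1)
  simpa [Matrix.mulVec_single, dotProduct, Pi.single_apply, Finset.sum_ite_eq,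
    apply_ite] using h

lemma psd_trace_nonneg {M : Matrix (Fin n) (Fin n) ℂ} (hM : M.PosSemidef) :
    0 ≤ M.trace := by
  rw [Matrix.trace]
  exact Finset.sum_nonneg fun i _ => psd_diag_nonneg hM i

lemma psd_trace_zero {M : Matrix (Fin n) (Fin n) ℂ} (hM : M.PosSemidef)
    (h : M.trace = 0) : M = 0 := by
  obtain ⟨C, hC2, hCH⟩ := psd_sqrt_exists hM
  obtain rfl : Cᴴ * C = M := by rw [hCH, hC2]
  suffices hC : C = 0 by rw [hC]; simp
  have htr : (Cᴴ * C).trace = ((∑ j, ∑ i, Complex.normSq (C i j) : ℝ) : ℂ) := by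
    push_cast
    simp [Matrix.trace, Matrix.diag, Matrix.mul_apply, Matrix.conjTranspose_apply,
      ← Complex.normSq_eq_conj_mul_self]
  rw [htr] at h
  norm_cast at h
  have hterm : ∀ j ∈ Finset.univ, ∀ i ∈ (Finset.univ : Finset (Fin n)),
      Complex.normSq (C i j) = 0 := by
    have h1 := (Finset.sum_eq_zero_iff_of_nonneg (fun j _ =>
      Finset.sum_nonneg fun i _ => Complex.normSq_nonneg _)).mp h
    intro j _ i hi
    exact (Finset.sum_eq_zero_iff_of_nonneg (fun i _ => Complex.normSq_nonneg _)).mp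
      (h1 j (Finset.mem_univ j)) i hi
  ext i j
  simpa using Complex.normSq_eq_zero.mp (hterm j (Finset.mem_univ j) i (Finset.mem_univ i))

end CQAux2
section CQAux3
open Matrix
open scoped ComplexOrder

variable {n : ℕ}

lemma vmv_mulVec (u v w : Fin n → ℂ) :
    vecMulVec u v *ᵥ w = (v ⬝ᵥ w) • u := by
  funext i
  simp only [Matrix.mulVec, dotProduct, vecMulVec_apply, Pi.smul_apply, smul_eq_mul]
  rw [Finset.sum_mul]
  congr 1; funext j; ring

lemma mul_vmv (A : Matrix (Fin n) (Fin n) ℂ) (u v : Fin n → ℂ) :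
    A * vecMulVec u v = vecMulVec (A *ᵥ u) v := by
  ext i j
  simp only [Matrix.mul_apply, vecMulVec_apply, Matrix.mulVec, dotProduct]
  rw [Finset.sum_mul]
  congr 1; funext k; ring

lemma vmv_smul_left (a : ℂ) (u v : Fin n → ℂ) :
    vecMulVec (a • u) v = a • vecMulVec u v := by
  ext i j
  simp only [vecMulVec_apply, Pi.smul_apply, Matrix.smul_apply, smul_eq_mul]
  ring

lemma hermCFC_congr {f g : ℝ → ℝ} (A : Matrix (Fin n) (Fin n) ℂ) (h : ∀ x, f x = g x) :
    hermCFC f A = hermCFC g A := by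
  have : f = g := funext h
  rw [this]

lemma pinv_conjTranspose {B : Matrix (Fin n) (Fin n) ℂ} (hB : B.IsHermitian) :
    (pinvMat B)ᴴ = pinvMat B := hermCFC_conjTranspose _ hB

lemma pinv_eq_mul_left {B : Matrix (Fin n) (Fin n) ℂ} (hB : B.IsHermitian) :
    pinvMat B = B * hermCFC (fun x => if x = 0 then 0 else x⁻¹ * x⁻¹) B := by
  have hid : hermCFC (fun x : ℝ => x) B = B := hermCFC_id hB
  calc pinvMat B = hermCFC (fun x : ℝ => x * (if x = 0 then 0 else x⁻¹ * x⁻¹)) B := by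
        refine hermCFC_congr B fun x => ?_
        by_cases hx : x = 0
        · simp [hx]
        · rw [if_neg hx, if_neg hx]; field_simp
    _ = hermCFC (fun x : ℝ => x) B * hermCFC (fun x => if x = 0 then 0 else x⁻¹ * x⁻¹) B :=
        (hermCFC_mul _ _ hB).symm
    _ = B * hermCFC (fun x => if x = 0 then 0 else x⁻¹ * x⁻¹) B := by rw [hid]

lemma pinv_eq_mul_right {B : Matrix (Fin n) (Fin n) ℂ} (hB : B.IsHermitian) :
    pinvMat B = hermCFC (fun x => if x = 0 then 0 else x⁻¹ * x⁻¹) B * B := by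
  have hid : hermCFC (fun x : ℝ => x) B = B := hermCFC_id hB
  calc pinvMat B = hermCFC (fun x : ℝ => (if x = 0 then 0 else x⁻¹ * x⁻¹) * x) B := by
        refine hermCFC_congr B fun x => ?_
        by_cases hx : x = 0
        · simp [hx]
        · rw [if_neg hx, if_neg hx]; field_simp
    _ = hermCFC (fun x => if x = 0 then 0 else x⁻¹ * x⁻¹) B * hermCFC (fun x : ℝ => x) B :=
        (hermCFC_mul _ _ hB).symm
    _ = hermCFC (fun x => if x = 0 then 0 else x⁻¹ * x⁻¹) B * B := by rw [hid]

lemma mul_pinv_self {B : Matrix (Fin n) (Fin n) ℂ} (hB : B.IsHermitian) :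
    B * pinvMat B = hermCFC (fun x => if x = 0 then 0 else 1) B := by
  have hid : hermCFC (fun x : ℝ => x) B = B := hermCFC_id hB
  calc B * pinvMat B
      = hermCFC (fun x : ℝ => x) B * hermCFC (fun x => if x = 0 then 0 else x⁻¹) B := by
        rw [hid]; rfl
    _ = hermCFC (fun x : ℝ => x * (if x = 0 then 0 else x⁻¹)) B := hermCFC_mul _ _ hB
    _ = hermCFC (fun x => if x = 0 then 0 else 1) B := by
        refine hermCFC_congr B fun x => ?_
        by_cases hx : x = 0
        · simp [hx]
        · rw [if_neg hx, if_neg hx]; field_simp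

lemma pinv_mul_self {B : Matrix (Fin n) (Fin n) ℂ} (hB : B.IsHermitian) :
    pinvMat B * B = hermCFC (fun x => if x = 0 then 0 else 1) B := by
  have hid : hermCFC (fun x : ℝ => x) B = B := hermCFC_id hB
  calc pinvMat B * B
      = hermCFC (fun x => if x = 0 then 0 else x⁻¹) B * hermCFC (fun x : ℝ => x) B := by
        rw [hid]; rfl
    _ = hermCFC (fun x : ℝ => (if x = 0 then 0 else x⁻¹) * x) B := hermCFC_mul _ _ hB
    _ = hermCFC (fun x => if x = 0 then 0 else 1) B := by
        refine hermCFC_congr B fun x => ?_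
        by_cases hx : x = 0
        · simp [hx]
        · rw [if_neg hx, if_neg hx]; field_simp

lemma mul_pinv_mul_self {B : Matrix (Fin n) (Fin n) ℂ} (hB : B.IsHermitian) :
    B * pinvMat B * B = B := by
  rw [mul_pinv_self hB]
  have hid : hermCFC (fun x : ℝ => x) B = B := hermCFC_id hB
  calc hermCFC (fun x => if x = 0 then 0 else 1) B * B
      = hermCFC (fun x => if x = 0 then 0 else 1) B * hermCFC (fun x : ℝ => x) B := by rw [hid]
    _ = hermCFC (fun x : ℝ => (if x = 0 then 0 else 1) * x) B := hermCFC_mul _ _ hB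
    _ = hermCFC (fun x : ℝ => x) B := by
        refine hermCFC_congr B fun x => ?_
        by_cases hx : x = 0
        · simp [hx]
        · simp [hx]
    _ = B := hid

end CQAux3
section CQAux4
open Matrix
open scoped ComplexOrder

variable {n : ℕ}

set_option maxHeartbeats 2000000 in
lemma schur_key (ψ : Fin n → ℂ) (hψ : star ψ ⬝ᵥ ψ = 1) (σ0 : Matrix (Fin n) (Fin n) ℂ)
    (hσ0 : σ0.PosSemidef) :
    ∃ c : ℝ,
      (schurCompl σ0 (vecMulVec ψ (star ψ))).trace = (c : ℂ) ∧
      (∀ a : ℝ, a ≤ c → (σ0 - (a : ℂ) • vecMulVec ψ (star ψ)).PosSemidef) ∧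
      (∀ a : ℝ, (σ0 - (a : ℂ) • vecMulVec ψ (star ψ)).PosSemidef → a ≤ c) := by
  set π := vecMulVec ψ (star ψ) with hπ
  set J : Matrix (Fin n) (Fin n) ℂ := 1 - π with hJ
  set B := J * σ0 * J with hB
  set Bp := pinvMat B with hBpdef
  set X := π * σ0 * J with hX
  set Y := J * σ0 * π with hY
  have hσH : σ0ᴴ = σ0 := hσ0.1
  have hπH : πᴴ = π := by
    rw [hπ]; ext i j
    simp only [conjTranspose_apply, vecMulVec_apply, Pi.star_apply, star_mul', star_star]
    ring
  have hπψ : π *ᵥ ψ = ψ := by rw [hπ, vmv_mulVec, hψ, one_smul]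
  have hJψ : J *ᵥ ψ = 0 := by rw [hJ, Matrix.sub_mulVec, Matrix.one_mulVec, hπψ, sub_self]
  have hππ : π * π = π := by
    rw [hπ, mul_vmv, vmv_mulVec, hψ, one_smul]
  have hπJ : π * J = 0 := by rw [hJ, mul_sub, mul_one, hππ, sub_self]
  have hJπ : J * π = 0 := by rw [hJ, sub_mul, one_mul, hππ, sub_self]
  have hJH : Jᴴ = J := by rw [hJ, conjTranspose_sub, conjTranspose_one, hπH]
  have hBH : B.IsHermitian := by
    show Bᴴ = B
    rw [hB, conjTranspose_mul, conjTranspose_mul, hJH, hσH, mul_assoc]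
  have hπB : π * B = 0 := by
    rw [hB]; simp only [← mul_assoc]; rw [hπJ, zero_mul, zero_mul]
  have hBπ : B * π = 0 := by
    rw [hB]; simp only [mul_assoc]; rw [hJπ, mul_zero, mul_zero]
  have hπBp : π * Bp = 0 := by
    rw [hBpdef, pinv_eq_mul_left hBH, ← mul_assoc, hπB, zero_mul]
  have hBpπ : Bp * π = 0 := by
    rw [hBpdef, pinv_eq_mul_right hBH, mul_assoc, hBπ, mul_zero]
  have hBpH : Bpᴴ = Bp := pinv_conjTranspose hBH
  have hYBp : Y * Bp = 0 := by
    rw [hY]; simp only [mul_assoc]; rw [hπBp, mul_zero, mul_zero]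
  have hBpX : Bp * X = 0 := by
    rw [hX]; simp only [← mul_assoc]; rw [hBpπ, zero_mul, zero_mul]
  have hXH : Xᴴ = Y := by
    rw [hX, hY, conjTranspose_mul, conjTranspose_mul, hJH, hσH, hπH, mul_assoc]
  have hYH : Yᴴ = X := by
    rw [hX, hY, conjTranspose_mul, conjTranspose_mul, hJH, hσH, hπH, mul_assoc]
  have hBBpB : B * Bp * B = B := mul_pinv_mul_self hBH
  have hBBpcomm : B * Bp = Bp * B := by
    rw [hBpdef, mul_pinv_self hBH, pinv_mul_self hBH]
  -- range condition
  have hBBpY : B * Bp * Y = Y := by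
    set P := 1 - B * Bp with hP
    have hPB : P * B = 0 := by rw [hP, sub_mul, one_mul, hBBpB, sub_self]
    have hPH : Pᴴ = P := by
      rw [hP, conjTranspose_sub, conjTranspose_one, conjTranspose_mul, hBpH, hBH.eq, hBBpcomm]
    obtain ⟨C, hC2, hCH⟩ := psd_sqrt_exists hσ0
    have hM : (P * J * C) * (P * J * C)ᴴ = 0 := by
      rw [conjTranspose_mul, conjTranspose_mul, hCH, hJH, hPH]
      calc P * J * C * (C * (J * P)) = P * (J * (C * (C * (J * P)))) := by
            simp only [mul_assoc]
        _ = P * (B * P) := by rw [show J * (C * (C * (J * P))) = B * P by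
              rw [hB]; simp only [← mul_assoc]; rw [mul_assoc J C C, hC2]]
        _ = 0 := by rw [← mul_assoc, hPB, zero_mul]
    have hM0 : P * J * C = 0 := Matrix.self_mul_conjTranspose_eq_zero.mp hM
    have hPY : P * Y = 0 := by
      calc P * Y = P * J * C * (C * π) := by
            rw [hY, ← hC2]; simp only [mul_assoc]
        _ = 0 := by rw [hM0, zero_mul]
    have := hPY
    rw [hP, sub_mul, one_mul, sub_eq_zero] at this
    exact this.symm
  have hXBpB : X * Bp * B = X := by
    set Q := 1 - Bp * B with hQdef
    have hBQ : B * Q = 0 := by rw [hQdef, mul_sub, mul_one, ← mul_assoc, hBBpB, sub_self]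
    have hQH : Qᴴ = Q := by
      rw [hQdef, conjTranspose_sub, conjTranspose_one, conjTranspose_mul, hBpH, hBH.eq,
        hBBpcomm]
    obtain ⟨C, hC2, hCH⟩ := psd_sqrt_exists hσ0
    have hM : (C * (J * Q))ᴴ * (C * (J * Q)) = 0 := by
      rw [conjTranspose_mul, conjTranspose_mul, hCH, hJH, hQH]
      calc Q * J * C * (C * (J * Q)) = Q * (J * (C * (C * (J * Q)))) := by
            simp only [mul_assoc]
        _ = Q * (B * Q) := by rw [show J * (C * (C * (J * Q))) = B * Q by
              rw [hB]; simp only [← mul_assoc]; rw [mul_assoc J C C, hC2]]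
        _ = 0 := by rw [hBQ, mul_zero]
    have hM0 : C * (J * Q) = 0 := Matrix.conjTranspose_mul_self_eq_zero.mp hM
    have hXQ : X * Q = 0 := by
      calc X * Q = π * (C * (C * (J * Q))) := by
            rw [hX, ← hC2]; simp only [mul_assoc]
        _ = 0 := by rw [hM0, mul_zero, mul_zero]
    rw [hQdef, mul_sub, mul_one, sub_eq_zero, ← mul_assoc] at hXQ
    exact hXQ.symm
  -- Schur complement and its scalar form
  have hS : schurCompl σ0 π = π * σ0 * π - X * Bp * Y := rfl
  set S := schurCompl σ0 π with hSdef
  have hpzp : ∀ Z : Matrix (Fin n) (Fin n) ℂ,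
      π * Z * π = (star ψ ⬝ᵥ (Z *ᵥ ψ)) • π := by
    intro Z
    conv_lhs => rw [hπ]
    rw [mul_vmv, ← Matrix.mulVec_mulVec, vmv_mulVec, vmv_smul_left, ← hπ]
  have hSz : S = π * (σ0 - σ0 * (J * (Bp * (J * σ0)))) * π := by
    rw [hS, hX, hY]
    simp only [mul_sub, sub_mul, mul_assoc]
  set cC : ℂ := star ψ ⬝ᵥ ((σ0 - σ0 * (J * (Bp * (J * σ0)))) *ᵥ ψ) with hcC
  have hScπ : S = cC • π := by rw [hSz, hpzp]
  -- trace of π is 1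
  have hπtr : π.trace = 1 := by
    rw [hπ, ← hψ]
    simp only [Matrix.trace, Matrix.diag, vecMulVec_apply, dotProduct, Pi.star_apply]
    exact Finset.sum_congr rfl fun i _ => (mul_comm _ _)
  have hStr : S.trace = cC := by
    rw [hScπ, Matrix.trace_smul, hπtr, smul_eq_mul, mul_one]
  -- cC is real
  have hWH : (σ0 - σ0 * (J * (Bp * (J * σ0))))ᴴ = σ0 - σ0 * (J * (Bp * (J * σ0))) := by
    rw [conjTranspose_sub, hσH, conjTranspose_mul, conjTranspose_mul, conjTranspose_mul,
      conjTranspose_mul, hσH, hJH, hBpH]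
    simp only [mul_assoc]
  have hcCreal : (cC.re : ℂ) = cC := by
    refine Complex.conj_eq_iff_re.mp ?_
    rw [hcC]
    have h1 : star (star ψ ⬝ᵥ ((σ0 - σ0 * (J * (Bp * (J * σ0)))) *ᵥ ψ))
        = star ψ ⬝ᵥ ((σ0 - σ0 * (J * (Bp * (J * σ0))))ᴴ *ᵥ ψ) := by
      rw [star_dotProduct, star_star, Matrix.star_mulVec, ← Matrix.dotProduct_mulVec]
    rw [← Complex.star_def, h1, hWH]
  -- the congruence identity
  set K := 1 + Bp * Y with hK
  have hKH : Kᴴ = 1 + X * Bp := by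
    rw [hK, conjTranspose_add, conjTranspose_one, conjTranspose_mul, hYH, hBpH]
  have hSBp : S * Bp = 0 := by
    rw [hS, sub_mul]
    have h1 : π * σ0 * π * Bp = 0 := by
      simp only [mul_assoc]; rw [hπBp, mul_zero, mul_zero]
    have h2 : X * Bp * Y * Bp = 0 := by
      simp only [mul_assoc]; rw [hYBp, mul_zero, mul_zero]
    rw [h1, h2, sub_self]
  have hBpS : Bp * S = 0 := by
    rw [hS, mul_sub]
    have h1 : Bp * (π * σ0 * π) = 0 := by
      simp only [← mul_assoc]; rw [hBpπ, zero_mul, zero_mul]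
    have h2 : Bp * (X * Bp * Y) = 0 := by
      simp only [← mul_assoc]; rw [hBpX, zero_mul, zero_mul]
    rw [h1, h2, sub_self]
  have hI1 : (S + B) * K = S + B + Y := by
    rw [hK, mul_add, mul_one, add_mul]
    rw [← mul_assoc S, hSBp, zero_mul, ← mul_assoc B, hBBpY, zero_add]
  have hI2 : Kᴴ * (S + B + Y) = σ0 := by
    rw [hKH, add_mul, one_mul, mul_add, mul_add]
    rw [mul_assoc X Bp S, hBpS, mul_zero, zero_add, hXBpB]
    have hdecomp : π * σ0 * π + X + Y + B = σ0 := by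
      rw [hX, hY, hB, hJ]; noncomm_ring
    have hSX : S + X * Bp * Y = π * σ0 * π := by rw [hS, sub_add_cancel]
    calc S + B + Y + (X + X * Bp * Y) = S + X * Bp * Y + X + Y + B := by abel
      _ = π * σ0 * π + X + Y + B := by rw [hSX]
      _ = σ0 := hdecomp
  have hI3 : Kᴴ * π * K = π := by
    rw [hKH, add_mul, one_mul, mul_assoc X Bp π, hBpπ, mul_zero, add_zero]
    rw [hK, mul_add, mul_one, ← mul_assoc π Bp Y, hπBp, zero_mul, add_zero]
  have hIden : ∀ z : ℂ, Kᴴ * (S + B - z • π) * K = σ0 - z • π := by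
    intro z
    calc Kᴴ * (S + B - z • π) * K = Kᴴ * (S + B) * K - z • (Kᴴ * π * K) := by
          rw [mul_sub, Matrix.mul_smul, sub_mul, Matrix.smul_mul]
      _ = σ0 - z • π := by rw [mul_assoc, hI1, hI2, hI3]
  refine ⟨cC.re, by rw [hStr]; exact hcCreal.symm, ?_, ?_⟩
  · -- a ≤ c implies PSD
    intro a ha
    have hπpsd : π.PosSemidef := by
      refine .of_dotProduct_mulVec_nonneg hπH fun x => ?_
      rw [hπ, vmv_mulVec, dotProduct_smul, smul_eq_mul]
      rw [show star x ⬝ᵥ ψ = star (star ψ ⬝ᵥ x) from star_dotProduct x ψ]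
      exact mul_star_self_nonneg _
    have hBpsd : B.PosSemidef := by
      have h := hσ0.conjTranspose_mul_mul_same J
      rw [hJH] at h
      exact h
    have hcast : cC - (a : ℂ) = ((cC.re - a : ℝ) : ℂ) := by
      rw [← hcCreal]; norm_cast
    have hpsd2 : ((cC - (a : ℂ)) • π + B).PosSemidef := by
      rw [hcast]
      exact (psd_smul_real hπpsd (by linarith)).add hBpsd
    have hSB : S + B - (a : ℂ) • π = (cC - (a : ℂ)) • π + B := by
      rw [hScπ, sub_smul]; abel
    have hgoal : σ0 - (a : ℂ) • π = Kᴴ * ((cC - (a : ℂ)) • π + B) * K := by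
      rw [← hIden (a : ℂ), hSB]
    rw [hgoal]
    exact hpsd2.conjTranspose_mul_mul_same K
  · -- PSD implies a ≤ c
    intro a hpsd
    set w₀ := ψ - Bp *ᵥ (Y *ᵥ ψ) with hw
    have hKw : K *ᵥ w₀ = ψ := by
      rw [hK, Matrix.add_mulVec, Matrix.one_mulVec]
      have h2 : (Bp * Y) *ᵥ w₀ = Bp *ᵥ (Y *ᵥ ψ) := by
        rw [hw, Matrix.mulVec_sub]
        have h3 : (Bp * Y) *ᵥ ψ = Bp *ᵥ (Y *ᵥ ψ) := (Matrix.mulVec_mulVec ψ Bp Y).symm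
        have h4 : (Bp * Y) *ᵥ (Bp *ᵥ (Y *ᵥ ψ)) = 0 := by
          rw [Matrix.mulVec_mulVec, mul_assoc Bp Y Bp, hYBp, mul_zero, Matrix.zero_mulVec]
        rw [h3, h4, sub_zero]
      rw [h2, hw, sub_add_cancel]
    have hval : star w₀ ⬝ᵥ ((σ0 - (a : ℂ) • π) *ᵥ w₀) = cC - a := by
      rw [← hIden (a : ℂ), mul_assoc, ← Matrix.mulVec_mulVec, ← Matrix.mulVec_mulVec, hKw]
      have hBψ : B *ᵥ ψ = 0 := by
        rw [hB, ← Matrix.mulVec_mulVec, hJψ, Matrix.mulVec_zero]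
      have hMψ : (S + B - (a : ℂ) • π) *ᵥ ψ = (cC - a) • ψ := by
        rw [Matrix.sub_mulVec, Matrix.add_mulVec, Matrix.smul_mulVec, hπψ]
        rw [hScπ, Matrix.smul_mulVec, hπψ, hBψ, add_zero, ← sub_smul]
      rw [hMψ, Matrix.mulVec_smul, dotProduct_smul, smul_eq_mul]
      rw [Matrix.dotProduct_mulVec, ← Matrix.star_mulVec, hKw, hψ, mul_one]
    have h0 := hpsd.dotProduct_mulVec_nonneg w₀
    rw [hval] at h0
    rw [Complex.le_def] at h0
    have h1 : (0:ℝ) ≤ (cC - (a : ℂ)).re := by simpa using h0.1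
    have h2 : (cC - (a : ℂ)).re = cC.re - a := by simp
    linarith [h1, h2 ▸ h1]

end CQAux4
section CQAux5
open Matrix
open scoped ComplexOrder

variable {n : ℕ}

lemma vmv_herm (ψ : Fin n → ℂ) :
    (vecMulVec ψ (star ψ))ᴴ = vecMulVec ψ (star ψ) := by
  ext i j
  simp only [conjTranspose_apply, vecMulVec_apply, Pi.star_apply, star_mul', star_star]
  ring

lemma vmv_psd (ψ : Fin n → ℂ) : (vecMulVec ψ (star ψ)).PosSemidef := by
  refine .of_dotProduct_mulVec_nonneg (vmv_herm ψ) fun x => ?_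
  rw [vmv_mulVec, dotProduct_smul, smul_eq_mul]
  rw [show star x ⬝ᵥ ψ = star (star ψ ⬝ᵥ x) from star_dotProduct x ψ]
  exact mul_star_self_nonneg _

lemma vmv_trace (ψ : Fin n → ℂ) : (vecMulVec ψ (star ψ)).trace = star ψ ⬝ᵥ ψ := by
  simp only [Matrix.trace, Matrix.diag, vecMulVec_apply, dotProduct, Pi.star_apply]
  exact Finset.sum_congr rfl fun i _ => (mul_comm _ _)

lemma pi_mul_mul_pi (ψ : Fin n → ℂ) (Z : Matrix (Fin n) (Fin n) ℂ) :
    vecMulVec ψ (star ψ) * Z * vecMulVec ψ (star ψ)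
      = (star ψ ⬝ᵥ (Z *ᵥ ψ)) • vecMulVec ψ (star ψ) := by
  rw [mul_vmv, ← Matrix.mulVec_mulVec, vmv_mulVec, vmv_smul_left]

lemma vmv_density (ψ : Fin n → ℂ) (hψ : star ψ ⬝ᵥ ψ = 1) :
    IsDensityMatrix (vecMulVec ψ (star ψ)) :=
  ⟨vmv_psd ψ, by rw [vmv_trace, hψ]⟩

/-- a PSD state annihilated by `1 - π` equals `π`. -/
lemma rho_pure (ψ : Fin n → ℂ) (hψ : star ψ ⬝ᵥ ψ = 1) (ρ : Matrix (Fin n) (Fin n) ℂ)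
    (hρ : ρ.PosSemidef) (htr : ρ.trace = 1)
    (hz : (1 - vecMulVec ψ (star ψ)) * ρ * (1 - vecMulVec ψ (star ψ)) = 0) :
    ρ = vecMulVec ψ (star ψ) := by
  set π := vecMulVec ψ (star ψ) with hπ
  set J : Matrix (Fin n) (Fin n) ℂ := 1 - π with hJ
  have hπH : πᴴ = π := vmv_herm ψ
  have hJH : Jᴴ = J := by rw [hJ, conjTranspose_sub, conjTranspose_one, hπH]
  obtain ⟨C, hC2, hCH⟩ := psd_sqrt_exists hρ
  have hM : (J * C) * (J * C)ᴴ = 0 := by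
    rw [conjTranspose_mul, hCH, hJH]
    calc J * C * (C * J) = J * C * C * J := by simp only [mul_assoc]
      _ = J * ρ * J := by rw [mul_assoc J C C, hC2]
      _ = 0 := hz
  have hJC : J * C = 0 := Matrix.self_mul_conjTranspose_eq_zero.mp hM
  have hJρ : J * ρ = 0 := by
    rw [← hC2, ← mul_assoc, hJC, zero_mul]
  have hρJ : ρ * J = 0 := by
    have h := congrArg Matrix.conjTranspose hJρ
    rw [conjTranspose_mul, hJH, hρ.1.eq, conjTranspose_zero] at h
    exact h
  have h1 : ρ = π * ρ := by
    have := hJρ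
    rw [hJ, sub_mul, one_mul, sub_eq_zero] at this
    exact this
  have h2 : ρ = ρ * π := by
    have := hρJ
    rw [hJ, mul_sub, mul_one, sub_eq_zero] at this
    exact this
  have h3 : ρ = π * ρ * π := by
    calc ρ = π * ρ := h1
      _ = π * (ρ * π) := by rw [← h2]
      _ = π * ρ * π := by rw [mul_assoc]
  have h4 : ρ = (star ψ ⬝ᵥ (ρ *ᵥ ψ)) • π := by
    refine h3.trans ?_
    rw [hπ, pi_mul_mul_pi]
  have h5 : star ψ ⬝ᵥ (ρ *ᵥ ψ) = 1 := by
    have := congrArg Matrix.trace h4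
    rw [htr, Matrix.trace_smul, hπ, vmv_trace, hψ, smul_eq_mul, mul_one] at this
    exact this.symm
  rw [h4, h5, one_smul]

/-- a finite sum of nonneg complex numbers is zero iff all are. -/
lemma csum_zero_of_nonneg {X : Type*} [Fintype X] {f : X → ℂ}
    (hf : ∀ x, 0 ≤ f x) (h : ∑ x, f x = 0) : ∀ x, f x = 0 := by
  intro x
  have hre : ∀ y, 0 ≤ (f y).re ∧ (f y).im = 0 := by
    intro y
    have := hf y
    rw [Complex.le_def] at this
    exact ⟨by simpa using this.1, by simpa using this.2.symm⟩
  have hs : ∑ y, (f y).re = 0 := by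
    have := congrArg Complex.re h
    simpa [Complex.re_sum] using this
  have hx : (f x).re = 0 :=
    (Finset.sum_eq_zero_iff_of_nonneg (fun y _ => (hre y).1)).mp hs x (Finset.mem_univ x)
  exact Complex.ext hx (hre x).2

lemma psd_sum {X : Type*} [Fintype X] (f : X → Matrix (Fin n) (Fin n) ℂ)
    (hf : ∀ x, (f x).PosSemidef) : (∑ x, f x).PosSemidef :=
  Finset.sum_induction f _ (fun _ _ ha hb => ha.add hb) Matrix.PosSemidef.zero
    (fun x _ => hf x)

end CQAux5
section CQAux6
open Matrix
open scoped ComplexOrder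

variable {n : ℕ}

lemma holder_bound {X : Type*} [Fintype X] (p0 p1 : X → ℝ) (hp0 : ProbVec p0)
    (hp1 : ProbVec p1) {s : ℝ} (hs : 0 < s) (hs1 : s < 1) :
    (∑ x, if 0 < p1 x then p0 x ^ s * p1 x ^ (1 - s) else 0)
      ≤ (∑ x, if 0 < p1 x then p0 x else 0) ^ s := by
  set a := ∑ x, if 0 < p1 x then p0 x else 0 with ha
  have hterm : ∀ x, (0:ℝ) ≤ (if 0 < p1 x then p0 x else 0) := fun x => by
    by_cases h : 0 < p1 x <;> simp [h, hp0.1 x]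
  have ha0 : 0 ≤ a := Finset.sum_nonneg fun x _ => hterm x
  rcases eq_or_lt_of_le ha0 with h0 | hpos
  · have hz : ∀ x, (if 0 < p1 x then p0 x else 0) = 0 := fun x =>
      (Finset.sum_eq_zero_iff_of_nonneg (fun x _ => hterm x)).mp h0.symm x (Finset.mem_univ x)
    have hzz : ∀ x, (if 0 < p1 x then p0 x ^ s * p1 x ^ (1-s) else 0) = 0 := by
      intro x; by_cases h : 0 < p1 x
      · have hp00 : p0 x = 0 := by simpa [h] using hz x
        simp [h, hp00, Real.zero_rpow (ne_of_gt hs)]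
      · simp [h]
    rw [Finset.sum_congr rfl (fun x _ => hzz x)]
    simp [Real.rpow_nonneg ha0 s]
  · have key : ∀ x, (if 0 < p1 x then p0 x ^ s * p1 x ^ (1 - s) else 0)
        ≤ a ^ s * (if 0 < p1 x then s * (p0 x / a) + (1 - s) * p1 x else 0) := by
      intro x
      by_cases h : 0 < p1 x
      · simp only [if_pos h]
        have h1 : p0 x ^ s = a ^ s * (p0 x / a) ^ s := by
          rw [← Real.mul_rpow ha0 (div_nonneg (hp0.1 x) ha0)]
          congr 1
          field_simp
        rw [h1, mul_assoc]
        refine mul_le_mul_of_nonneg_left ?_ (Real.rpow_nonneg ha0 s)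
        exact Real.geom_mean_le_arith_mean2_weighted hs.le (by linarith)
          (div_nonneg (hp0.1 x) ha0) (le_of_lt h) (by ring)
      · simp [h]
    calc (∑ x, if 0 < p1 x then p0 x ^ s * p1 x ^ (1-s) else 0)
        ≤ ∑ x, a ^ s * (if 0 < p1 x then s * (p0 x / a) + (1 - s) * p1 x else 0) :=
          Finset.sum_le_sum (fun x _ => key x)
      _ = a ^ s * ∑ x, (if 0 < p1 x then s * (p0 x / a) + (1 - s) * p1 x else 0) := by
          rw [Finset.mul_sum]
      _ ≤ a ^ s * 1 := by
          refine mul_le_mul_of_nonneg_left ?_ (Real.rpow_nonneg ha0 s)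
          have hsplit : ∑ x, (if 0 < p1 x then s * (p0 x / a) + (1-s) * p1 x else 0)
              = (s / a) * (∑ x, if 0 < p1 x then p0 x else 0)
                + (1 - s) * (∑ x, if 0 < p1 x then p1 x else 0) := by
            rw [Finset.mul_sum, Finset.mul_sum, ← Finset.sum_add_distrib]
            refine Finset.sum_congr rfl fun x _ => ?_
            by_cases h : 0 < p1 x <;> simp [h] <;> ring
          have hp1sum : (∑ x, if 0 < p1 x then p1 x else 0) = 1 := by
            rw [← hp1.2]
            refine Finset.sum_congr rfl fun x _ => ?_
            by_cases h : 0 < p1 x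
            · rw [if_pos h]
            · rw [if_neg h, le_antisymm (not_lt.mp h) (hp1.1 x)]
          rw [hsplit, ← ha, hp1sum, mul_one, div_mul_cancel₀ s (ne_of_gt hpos)]
          linarith
      _ = a ^ s := mul_one _

lemma tendsto_sum_rpow {X : Type*} [Fintype X] (p0 p1 : X → ℝ) (hp0 : ∀ x, 0 ≤ p0 x)
    {s0 : ℝ} (hs0 : 0 < s0) :
    Filter.Tendsto (fun s : ℝ => ∑ x, if 0 < p1 x then p0 x ^ s * p1 x ^ (1 - s) else 0)
      (nhdsWithin 1 (Set.Ioo s0 1)) (nhds (∑ x, if 0 < p1 x then p0 x else 0)) := by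
  refine tendsto_finset_sum _ fun x _ => ?_
  by_cases h : 0 < p1 x
  · simp only [if_pos h]
    by_cases h0 : 0 < p0 x
    · have hcont : ContinuousAt (fun s : ℝ => p0 x ^ s * p1 x ^ (1 - s)) 1 := by
        refine ContinuousAt.mul (Real.continuousAt_const_rpow (ne_of_gt h0)) ?_
        exact (Real.continuousAt_const_rpow (a := p1 x) (ne_of_gt h)).comp
          ((continuous_const.sub continuous_id).continuousAt)
      have ht : Filter.Tendsto (fun s : ℝ => p0 x ^ s * p1 x ^ (1 - s))
          (nhdsWithin 1 (Set.Ioo s0 1)) (nhds (p0 x ^ (1:ℝ) * p1 x ^ (1 - (1:ℝ)))) :=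
        hcont.tendsto.mono_left nhdsWithin_le_nhds
      simpa [Real.rpow_one, Real.rpow_zero] using ht
    · have hp00 : p0 x = 0 := le_antisymm (not_lt.mp h0) (hp0 x)
      rw [hp00]
      have hev : ∀ᶠ s in nhdsWithin (1:ℝ) (Set.Ioo s0 1),
          (0:ℝ) ^ s * p1 x ^ (1 - s) = 0 := by
        filter_upwards [self_mem_nhdsWithin] with s hs
        rw [Real.zero_rpow (ne_of_gt (lt_trans hs0 hs.1)), zero_mul]
      exact (Filter.tendsto_congr' (hev.mono fun s hs => hs.symm)).mp tendsto_const_nhds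
  · simp only [if_neg h]
    exact tendsto_const_nhds

lemma cq_ite {X : Type*} [Fintype X] {n : ℕ} (P : X → Prop) [DecidablePred P]
    (q : X → ℝ) (M N : Matrix (Fin n) (Fin n) ℂ) :
    cqApply (fun x => if P x then M else N) q
      = ((∑ x, if P x then q x else 0 : ℝ) : ℂ) • M
        + ((∑ x, if P x then 0 else q x : ℝ) : ℂ) • N := by
  rw [cqApply]
  have e1 : ((∑ x, if P x then q x else 0 : ℝ) : ℂ) = ∑ x, if P x then (q x : ℂ) else 0 := by
    push_cast
    exact Finset.sum_congr rfl fun x _ => by by_cases h : P x <;> simp [h]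
  have e2 : ((∑ x, if P x then 0 else q x : ℝ) : ℂ) = ∑ x, if P x then 0 else (q x : ℂ) := by
    push_cast
    exact Finset.sum_congr rfl fun x _ => by by_cases h : P x <;> simp [h]
  rw [e1, e2, Finset.sum_smul, Finset.sum_smul, ← Finset.sum_add_distrib]
  refine Finset.sum_congr rfl fun x _ => ?_
  by_cases h : P x <;> simp [h]

end CQAux6
set_option maxHeartbeats 1000000 in
/-- For a pure target state `σ1 = ψψ*`, a classical-to-quantum
channel `Γ` with `Γ(p0) = σ0`, `Γ(p1) = σ1` exists iff
`Σ_{x : p1(x)>0} p0(x)^s p1(x)^{1-s} ≤ γ^s` for every `s ∈ (s0,1)`,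
where `γ = tr σ̃0`. -/
theorem cq_channel_exists_iff_rpow_ineq {n : ℕ} {X : Type*} [Fintype X]
    (ψ : Fin n → ℂ) (hψ : star ψ ⬝ᵥ ψ = 1)
    (σ0 : Matrix (Fin n) (Fin n) ℂ) (hσ0 : IsDensityMatrix σ0)
    (p0 p1 : X → ℝ) (hp0 : ProbVec p0) (hp1 : ProbVec p1)
    (s0 : ℝ) (hs0 : 0 < s0) (hs01 : s0 < 1) :
    (∃ ρ : X → Matrix (Fin n) (Fin n) ℂ, (∀ x, IsDensityMatrix (ρ x)) ∧
        cqApply ρ p0 = σ0 ∧ cqApply ρ p1 = vecMulVec ψ (star ψ)) ↔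
      ∀ s : ℝ, s0 < s → s < 1 →
        (∑ x, if 0 < p1 x then p0 x ^ s * p1 x ^ (1 - s) else 0) ≤
          ((schurCompl σ0 (vecMulVec ψ (star ψ))).trace.re) ^ s := by
  obtain ⟨hσpsd, hσtr⟩ := hσ0
  set π := vecMulVec ψ (star ψ) with hπdef
  obtain ⟨c, hctr, hc1, hc2⟩ := schur_key ψ hψ σ0 hσpsd
  have hγ : (schurCompl σ0 π).trace.re = c := by rw [hctr]; simp
  have hcnn : 0 ≤ c := by
    refine hc2 0 ?_
    rw [Complex.ofReal_zero, zero_smul, sub_zero]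
    exact hσpsd
  set a := ∑ x, if 0 < p1 x then p0 x else 0 with hadef
  have ha0 : 0 ≤ a := Finset.sum_nonneg fun x _ => by
    by_cases h : 0 < p1 x <;> simp [h, hp0.1 x]
  have hπpsd : π.PosSemidef := vmv_psd ψ
  have hπtr : π.trace = 1 := by rw [hπdef, vmv_trace, hψ]
  have hππ : π * π = π := by rw [hπdef, mul_vmv, vmv_mulVec, hψ, one_smul]
  constructor
  · rintro ⟨ρ, hρd, hρ0, hρ1⟩ s hss0 hs1
    rw [hγ]
    set J : Matrix (Fin n) (Fin n) ℂ := 1 - π with hJdef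
    have hJπJ : J * π * J = 0 := by
      rw [hJdef, sub_mul, one_mul, hππ, sub_self, zero_mul]
    have hsum0 : ∑ x, (p1 x : ℂ) • (J * ρ x * J) = 0 := by
      have h1 : J * cqApply ρ p1 * J = ∑ x, (p1 x : ℂ) • (J * ρ x * J) := by
        rw [cqApply, Finset.mul_sum, Finset.sum_mul]
        refine Finset.sum_congr rfl fun x _ => ?_
        rw [Matrix.mul_smul, Matrix.smul_mul]
      rw [← h1, hρ1, hJπJ]
    have hJρJpsd : ∀ y, (J * ρ y * J).PosSemidef := by
      intro y
      have hJH : Jᴴ = J := by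
        rw [hJdef, conjTranspose_sub, conjTranspose_one, hπdef, vmv_herm]
      have h := (hρd y).1.conjTranspose_mul_mul_same J
      rwa [hJH] at h
    have hpure : ∀ x, 0 < p1 x → ρ x = π := by
      intro x hx
      have htr0 : ∑ y, (p1 y : ℂ) * (J * ρ y * J).trace = 0 := by
        have h2 := congrArg Matrix.trace hsum0
        rw [Matrix.trace_sum, Matrix.trace_zero] at h2
        rw [← h2]
        exact Finset.sum_congr rfl fun y _ => by rw [Matrix.trace_smul, smul_eq_mul]
      have hzz := csum_zero_of_nonneg (f := fun y => (p1 y : ℂ) * (J * ρ y * J).trace)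
        (fun y => mul_nonneg (by rw [Complex.nonneg_iff]; simp [hp1.1 y])
          (psd_trace_nonneg (hJρJpsd y))) htr0 x
      have hne : (p1 x : ℂ) ≠ 0 := by exact_mod_cast (ne_of_gt hx)
      have htrx : (J * ρ x * J).trace = 0 := (mul_eq_zero.mp hzz).resolve_left hne
      have hzero : J * ρ x * J = 0 := psd_trace_zero (hJρJpsd x) htrx
      exact rho_pure ψ hψ (ρ x) (hρd x).1 (hρd x).2 hzero
    have hsplit : σ0 - ((a : ℝ) : ℂ) • π
        = ∑ x, if 0 < p1 x then 0 else (p0 x : ℂ) • ρ x := by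
      rw [← hρ0, cqApply]
      have haC : ((a:ℝ):ℂ) • π = ∑ x, if 0 < p1 x then (p0 x : ℂ) • π else 0 := by
        have e : ((a:ℝ):ℂ) = ∑ x, if 0 < p1 x then (p0 x : ℂ) else 0 := by
          rw [hadef]
          push_cast
          exact Finset.sum_congr rfl fun x _ => by by_cases h : 0 < p1 x <;> simp [h]
        rw [e, Finset.sum_smul]
        exact Finset.sum_congr rfl fun x _ => by by_cases h : 0 < p1 x <;> simp [h]
      rw [haC, ← Finset.sum_sub_distrib]
      refine Finset.sum_congr rfl fun x _ => ?_
      by_cases h : 0 < p1 x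
      · rw [if_pos h, if_pos h, hpure x h, sub_self]
      · rw [if_neg h, if_neg h, sub_zero]
    have hpsd : (σ0 - ((a:ℝ):ℂ) • π).PosSemidef := by
      rw [hsplit]
      refine psd_sum _ fun x => ?_
      by_cases h : 0 < p1 x
      · simp only [if_pos h]; exact Matrix.PosSemidef.zero
      · simp only [if_neg h]; exact psd_smul_real (hρd x).1 (hp0.1 x)
    have hac : a ≤ c := hc2 a hpsd
    have hs' : 0 < s := lt_trans hs0 hss0
    calc (∑ x, if 0 < p1 x then p0 x ^ s * p1 x ^ (1-s) else 0) ≤ a ^ s :=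
          holder_bound p0 p1 hp0 hp1 hs' hs1
      _ ≤ c ^ s := Real.rpow_le_rpow ha0 hac hs'.le
  · intro hineq
    have hineq' : ∀ s : ℝ, s0 < s → s < 1 →
        (∑ x, if 0 < p1 x then p0 x ^ s * p1 x ^ (1 - s) else 0) ≤ c ^ s := by
      intro s h1 h2
      have := hineq s h1 h2
      rwa [hγ] at this
    have hac : a ≤ c := by
      by_cases hc0 : c = 0
      · set s := (s0 + 1)/2 with hs
        have hss0 : s0 < s := by rw [hs]; linarith
        have hs1 : s < 1 := by rw [hs]; linarith
        have hspos : 0 < s := lt_trans hs0 hss0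
        have h := hineq' s hss0 hs1
        rw [hc0, Real.zero_rpow (ne_of_gt hspos)] at h
        have hterms : ∀ x ∈ Finset.univ,
            (0:ℝ) ≤ (if 0 < p1 x then p0 x ^ s * p1 x ^ (1-s) else 0) := fun x _ => by
          by_cases hx : 0 < p1 x
          · simp only [if_pos hx]
            exact mul_nonneg (Real.rpow_nonneg (hp0.1 x) s)
              (Real.rpow_nonneg (le_of_lt hx) _)
          · simp [hx]
        have hzero := (Finset.sum_eq_zero_iff_of_nonneg hterms).mp
          (le_antisymm h (Finset.sum_nonneg hterms))
        have hz : ∀ x, (if 0 < p1 x then p0 x else 0) = 0 := by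
          intro x; by_cases hx : 0 < p1 x
          · have h5 := hzero x (Finset.mem_univ x)
            rw [if_pos hx] at h5
            have hp1pos := Real.rpow_pos_of_pos hx (1 - s)
            have h6 : p0 x ^ s = 0 := by
              rcases mul_eq_zero.mp h5 with h7 | h7
              · exact h7
              · exact absurd h7 (ne_of_gt hp1pos)
            rw [if_pos hx]
            exact (Real.rpow_eq_zero (hp0.1 x) (ne_of_gt hspos)).mp h6
          · rw [if_neg hx]
        rw [hadef, Finset.sum_congr rfl fun x _ => hz x, Finset.sum_const_zero, hc0]
      · haveI : (nhdsWithin (1:ℝ) (Set.Ioo s0 1)).NeBot := right_nhdsWithin_Ioo_neBot hs01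
        have hF := tendsto_sum_rpow p0 p1 hp0.1 hs0
        have hG : Filter.Tendsto (fun s : ℝ => c ^ s)
            (nhdsWithin 1 (Set.Ioo s0 1)) (nhds c) := by
          have h1 : ContinuousAt (fun s : ℝ => c ^ s) 1 := Real.continuousAt_const_rpow hc0
          have h2 := h1.tendsto.mono_left
            (nhdsWithin_le_nhds (s := Set.Ioo s0 1) (a := (1:ℝ)))
          rwa [Real.rpow_one] at h2
        refine le_of_tendsto_of_tendsto hF hG ?_
        filter_upwards [self_mem_nhdsWithin] with s hs
        exact hineq' s hs.1 hs.2
    have hpsdA : (σ0 - ((a:ℝ):ℂ) • π).PosSemidef := hc1 a hac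
    have ha1 : a ≤ 1 := by
      rw [hadef, ← hp0.2]
      refine Finset.sum_le_sum fun x _ => ?_
      by_cases h : 0 < p1 x <;> simp [h, hp0.1 x]
    obtain ⟨τ, hτd, hτeq⟩ : ∃ τ : Matrix (Fin n) (Fin n) ℂ,
        IsDensityMatrix τ ∧ σ0 = ((a:ℝ):ℂ) • π + ((1 - a : ℝ):ℂ) • τ := by
      have htrA : (σ0 - ((a:ℝ):ℂ) • π).trace = ((1 - a : ℝ) : ℂ) := by
        rw [Matrix.trace_sub, Matrix.trace_smul, hσtr, hπtr, smul_eq_mul, mul_one]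
        push_cast
        ring
      rcases lt_or_eq_of_le ha1 with hlt | heq
      · have hane : (1 - a : ℝ) ≠ 0 := by linarith
        refine ⟨(((1 - a : ℝ)⁻¹ : ℝ) : ℂ) • (σ0 - ((a:ℝ):ℂ) • π), ⟨?_, ?_⟩, ?_⟩
        · exact psd_smul_real hpsdA (inv_nonneg.mpr (by linarith))
        · rw [Matrix.trace_smul, htrA, smul_eq_mul, ← Complex.ofReal_mul,
            inv_mul_cancel₀ hane, Complex.ofReal_one]
        · rw [smul_smul]
          have : (((1 - a : ℝ) : ℂ)) * (((1 - a : ℝ)⁻¹ : ℝ) : ℂ) = 1 := by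
            rw [← Complex.ofReal_mul, mul_inv_cancel₀ hane, Complex.ofReal_one]
          rw [this, one_smul, add_sub_cancel]
      · have hσπ : σ0 = π := by
          have h7 : (σ0 - ((a:ℝ):ℂ) • π).trace = 0 := by
            rw [htrA, heq]
            norm_num
          have h8 := psd_trace_zero hpsdA h7
          have h9 : σ0 = ((a:ℝ):ℂ) • π := by
            rw [sub_eq_zero] at h8
            exact h8
          rw [h9, heq]
          push_cast
          rw [one_smul]
        refine ⟨π, vmv_density ψ hψ, ?_⟩
        rw [hσπ, heq]
        norm_num
    refine ⟨fun x => if 0 < p1 x then π else τ, ?_, ?_, ?_⟩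
    · intro x
      show IsDensityMatrix (if 0 < p1 x then π else τ)
      by_cases h : 0 < p1 x
      · rw [if_pos h]; exact vmv_density ψ hψ
      · rw [if_neg h]; exact hτd
    · rw [cq_ite (fun x => 0 < p1 x) p0 π τ, ← hadef]
      have hb : (∑ x, if 0 < p1 x then 0 else p0 x) = 1 - a := by
        have h10 : a + ∑ x, (if 0 < p1 x then 0 else p0 x) = 1 := by
          rw [hadef, ← Finset.sum_add_distrib, ← hp0.2]
          exact Finset.sum_congr rfl fun x _ => by by_cases h : 0 < p1 x <;> simp [h]
        linarith
      rw [hb, ← hτeq]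
    · rw [cq_ite (fun x => 0 < p1 x) p1 π τ]
      have hA : (∑ x, if 0 < p1 x then p1 x else 0) = 1 := by
        rw [← hp1.2]
        refine Finset.sum_congr rfl fun x _ => ?_
        by_cases h : 0 < p1 x
        · rw [if_pos h]
        · rw [if_neg h, le_antisymm (not_lt.mp h) (hp1.1 x)]
      have hB : (∑ x, if 0 < p1 x then 0 else p1 x) = 0 := by
        refine Finset.sum_eq_zero fun x _ => ?_
        by_cases h : 0 < p1 x
        · rw [if_pos h]
        · rw [if_neg h, le_antisymm (not_lt.mp h) (hp1.1 x)]
      rw [hA, hB, Complex.ofReal_one, one_smul, Complex.ofReal_zero, zero_smul, add_zero]
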